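/- Independent sets give proximity: Let C be an [n,k,d] code, m ≥ 3, and let G be the inconsistency graph on vertex set [m]×[n] built from r ∈ Σ^{[n]^m}, threshold τ, and closest codewords c_{b,i} ∈ C^{m-1}. If G has an independent set I of size at least m(n−d) + d + 1, then δ_{C^m}(r) ≤ 1 − (|I|/(mn))·(1 − τ). -/

import Mathlib

/-- Relative Hamming distance between two words indexed by a finite type. -/
noncomputable def relHammingDist {ι F : Type} [Fintype ι] [DecidableEq F] (x y : ι → F) : ℝ :=
  (hammingDist x y : ℝ) / (Fintype.card ι)

/-- Relative Hamming distance from a word to (the nearest codeword of) a code. -/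
noncomputable def distToCode {ι F : Type} [Fintype ι] [DecidableEq F] (C : Set (ι → F)) (r : ι → F) : ℝ :=
  sInf (relHammingDist r '' C)

/-- Minimum Hamming distance of a code. -/
noncomputable def minDist {ι F : Type} [Fintype ι] [DecidableEq F] (C : Set (ι → F)) : ℕ :=
  sInf {e | ∃ x ∈ C, ∃ y ∈ C, x ≠ y ∧ hammingDist x y = e}

/-- The `m`-fold tensor power `C^m` of a code `C ⊆ F^n`. -/
def tensorPow {F : Type} {n : ℕ} (C : Set (Fin n → F)) (m : ℕ) :
    Set ((Fin m → Fin n) → F) :=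
  {r | ∀ (b : Fin m) (x : Fin m → Fin n), (fun i => r (Function.update x b i)) ∈ C}

/-- The slice `r_{b,i}`: fix the `b`-th coordinate of the array to `i`. -/
def sliceAt {F : Type} {n m : ℕ} (r : (Fin (m + 1) → Fin n) → F) (b : Fin (m + 1)) (i : Fin n) :
    (Fin m → Fin n) → F :=
  fun x => r (b.insertNth i x)

/-- The inconsistency graph on the planes `[m] × [n]` (ambient dimension `m = mm+3`):
`(b₁,i₁) ~ (b₂,i₂)` iff one of the two slices is more than `τ`-far from `C^{mm+2}`, or
`b₁ ≠ b₂` and the assigned codewords disagree at some common point. -/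
def InconsAdj {F : Type} [Fintype F] [DecidableEq F] {n mm : ℕ}
    (C : Set (Fin n → F)) (r : (Fin (mm + 3) → Fin n) → F) (τ : ℝ)
    (c : ∀ (_ : Fin (mm + 3)) (_ : Fin n), (Fin (mm + 2) → Fin n) → F)
    (v w : Fin (mm + 3) × Fin n) : Prop :=
  τ < distToCode (tensorPow C (mm + 2)) (sliceAt r v.1 v.2) ∨
  τ < distToCode (tensorPow C (mm + 2)) (sliceAt r w.1 w.2) ∨
  (v.1 ≠ w.1 ∧ ∃ j : Fin (mm + 3) → Fin n, j v.1 = v.2 ∧ j w.1 = w.2 ∧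
    c v.1 v.2 (fun t => j (v.1.succAbove t)) ≠ c w.1 w.2 (fun t => j (w.1.succAbove t)))

section Sep
variable {F : Type} [DecidableEq F] {n d : ℕ}

/-- two codewords agreeing on a large set are equal -/
lemma sep_lemma (C : Set (Fin n → F)) (hd : minDist C = d)
    {u v : Fin n → F} (hu : u ∈ C) (hv : v ∈ C) (S : Finset (Fin n))
    (hS : n < d + S.card) (hagree : ∀ i ∈ S, u i = v i) : u = v := by
  by_contra hne
  have hmem : hammingDist u v ∈ {e | ∃ x ∈ C, ∃ y ∈ C, x ≠ y ∧ hammingDist x y = e} :=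
    ⟨u, hu, v, hv, hne, rfl⟩
  have hge : d ≤ hammingDist u v := hd ▸ Nat.sInf_le hmem
  have hle : hammingDist u v ≤ n - S.card := by
    have : (Finset.univ.filter (fun i => u i ≠ v i)) ⊆ Sᶜ := by
      intro i hi
      simp only [Finset.mem_filter] at hi
      simp only [Finset.mem_compl]
      intro hiS
      exact hi.2 (hagree i hiS)
    calc hammingDist u v = (Finset.univ.filter (fun i => u i ≠ v i)).card := rfl
      _ ≤ Sᶜ.card := Finset.card_le_card this
      _ = n - S.card := by rw [Finset.card_compl, Fintype.card_fin]
  have hpos : 0 < hammingDist u v := hammingDist_pos.2 hne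
  omega

/-- two tensor codewords agreeing on a slab are equal -/
lemma tensor_sep {m : ℕ} (C : Set (Fin n → F)) (hd : minDist C = d)
    {u v : (Fin m → Fin n) → F} (hu : u ∈ tensorPow C m) (hv : v ∈ tensorPow C m)
    (t : Fin m) (S : Finset (Fin n)) (hS : n < d + S.card)
    (h : ∀ x : Fin m → Fin n, x t ∈ S → u x = v x) : u = v := by
  funext x
  have hline : (fun i => u (Function.update x t i)) = (fun i => v (Function.update x t i)) := by
    refine sep_lemma C hd (hu t x) (hv t x) S hS ?_
    intro i hi
    exact h _ (by simp [hi])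
  have := congrFun hline (x t)
  simpa using this
end Sep

section Tuple
variable {α : Type} {m : ℕ}

lemma insertNth_update (b : Fin (m+1)) (i : α) (z : Fin m → α) (t : Fin m) (i' : α) :
    b.insertNth (α := fun _ => α) i (Function.update z t i') =
      Function.update (b.insertNth (α := fun _ => α) i z) (b.succAbove t) i' := by
  funext s
  refine Fin.succAboveCases b ?_ (fun s => ?_) s
  · rw [Fin.insertNth_apply_same,
      Function.update_of_ne (Fin.succAbove_ne b t).symm, Fin.insertNth_apply_same]
  · rcases eq_or_ne s t with rfl | hst
    · simp
    · rw [Fin.insertNth_apply_succAbove, Function.update_of_ne hst,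
        Function.update_of_ne (fun h => hst (Fin.succAbove_right_injective h)),
        Fin.insertNth_apply_succAbove]

end Tuple

section Mem
variable {F : Type} [Field F] {n : ℕ}

omit [Field F] in
lemma slice_mem {m : ℕ} (C : Set (Fin n → F)) (w : (Fin (m+1) → Fin n) → F)
    (hw : w ∈ tensorPow C (m+1)) (b : Fin (m+1)) (i : Fin n) :
    sliceAt w b i ∈ tensorPow C m := by
  intro t z
  have := hw (b.succAbove t) (b.insertNth i z)
  simpa [sliceAt, insertNth_update] using this

/-- a pointwise-linear-functional image of lines in C is in C -/
lemma line_comb (C : Submodule F (Fin n → F)) {ι : Type} [Fintype ι] [DecidableEq ι]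
    (L : (ι → F) →ₗ[F] (Fin n → F)) (i0 : Fin n) (g : Fin n → ι → F)
    (hg : ∀ s : ι, (fun j => g j s) ∈ C) : (fun j => L (g j) i0) ∈ C := by
  have hrw : (fun j => L (g j) i0)
      = ∑ s : ι, (L (fun j' => if s = j' then 1 else 0) i0) • (fun j => g j s) := by
    funext j
    rw [pi_eq_sum_univ (g j), map_sum]
    simp [Finset.sum_apply, mul_comm]
  rw [hrw]
  exact Submodule.sum_mem C fun s _ => Submodule.smul_mem C _ (hg s)

end Mem

section Section
variable {F : Type} [Field F] [DecidableEq F] {n d : ℕ}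

lemma exists_section (C : Submodule F (Fin n → F)) (hd : minDist (C : Set (Fin n → F)) = d)
    (S : Finset (Fin n)) (hS : n < d + S.card) :
    ∃ L : ({i // i ∈ S} → F) →ₗ[F] (Fin n → F),
      (∀ v, L v ∈ C) ∧ (∀ u ∈ C, L (fun s => u s.1) = u) := by
  classical
  set res : (Fin n → F) →ₗ[F] ({i // i ∈ S} → F) :=
    LinearMap.funLeft F F (fun s : {i // i ∈ S} => s.1) with hres
  set f : C →ₗ[F] ({i // i ∈ S} → F) := res ∘ₗ C.subtype with hf
  have hinj : Function.Injective f := by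
    intro u v huv
    ext1
    refine sep_lemma (C : Set (Fin n → F)) hd u.2 v.2 S hS ?_
    intro i hi
    exact congrFun huv ⟨i, hi⟩
  set e := LinearEquiv.ofInjective f hinj with he
  obtain ⟨W', hW'⟩ := Submodule.exists_isCompl (LinearMap.range f)
  set π := (LinearMap.range f).linearProjOfIsCompl W' hW' with hπ
  refine ⟨C.subtype ∘ₗ (e.symm : LinearMap.range f →ₗ[F] C) ∘ₗ π, ?_, ?_⟩
  · intro v
    simp only [LinearMap.comp_apply, Submodule.coe_subtype]
    exact Submodule.coe_mem _
  · intro u hu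
    have h1 : (fun s : {i // i ∈ S} => u s.1) = f ⟨u, hu⟩ := rfl
    simp only [LinearMap.comp_apply, h1]
    have h2 : π (f ⟨u, hu⟩) = ⟨f ⟨u, hu⟩, LinearMap.mem_range_self f _⟩ := by
      have := Submodule.linearProjOfIsCompl_apply_left hW'
        (⟨f ⟨u, hu⟩, LinearMap.mem_range_self f _⟩ : LinearMap.range f)
      exact this
    rw [h2]
    have h3 : e ⟨u, hu⟩ = ⟨f ⟨u, hu⟩, LinearMap.mem_range_self f _⟩ := by
      apply Subtype.ext
      simp [he, LinearEquiv.ofInjective_apply]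
    rw [← h3, LinearEquiv.coe_coe, LinearEquiv.symm_apply_apply]
    rfl
end Section

set_option maxHeartbeats 1000000 in
/-- Independent sets give proximity. With `C` an `[n,k,d]` code, ambient
dimension `m = mm+3 ≥ 3`, `r`, threshold `τ`, and closest-codeword assignments
`c b i ∈ C^{m-1}` as above: if the inconsistency graph has an independent set `I` of
size at least `m(n−d) + d + 1`, then `δ_{C^m}(r) ≤ 1 − (|I|/(mn))·(1 − τ)`. -/
theorem independent_set_proximity
    {F : Type} [Field F] [Fintype F] [DecidableEq F] {n k d mm : ℕ}
    (C : Submodule F (Fin n → F))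
    (hk : Module.finrank F C = k)
    (hd : minDist (C : Set (Fin n → F)) = d) (hdn : d ≤ n)
    (r : (Fin (mm + 3) → Fin n) → F) (τ : ℝ) (h0τ : 0 ≤ τ) (hτ1 : τ ≤ 1)
    (c : ∀ (_ : Fin (mm + 3)) (_ : Fin n), (Fin (mm + 2) → Fin n) → F)
    (hcmem : ∀ b i, c b i ∈ tensorPow (C : Set (Fin n → F)) (mm + 2))
    (hclosest : ∀ b i, relHammingDist (sliceAt r b i) (c b i) =
      distToCode (tensorPow (C : Set (Fin n → F)) (mm + 2)) (sliceAt r b i))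
    (I : Finset (Fin (mm + 3) × Fin n))
    (hind : ∀ v ∈ I, ∀ w ∈ I, v ≠ w → ¬ InconsAdj (C : Set (Fin n → F)) r τ c v w)
    (hcard : (mm + 3) * (n - d) + d + 1 ≤ I.card) :
    distToCode (tensorPow (C : Set (Fin n → F)) (mm + 3)) r ≤
      1 - ((I.card : ℝ) / ((mm + 3) * n)) * (1 - τ) := by
  classical
  -- basic size facts
  have hIcard_le : I.card ≤ (mm + 3) * n := by
    calc I.card ≤ Fintype.card (Fin (mm + 3) × Fin n) := Finset.card_le_univ I
      _ = (mm + 3) * n := by simp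
  have hd1 : 1 ≤ d := by
    by_contra h
    push_neg at h
    have hd0 : d = 0 := by omega
    subst hd0
    simp only [Nat.sub_zero] at hcard
    omega
  have hn1 : 1 ≤ n := le_trans hd1 hdn
  have hI2 : 2 ≤ I.card := by omega
  -- consequences of independence
  have far : ∀ v ∈ I, relHammingDist (sliceAt r v.1 v.2) (c v.1 v.2) ≤ τ := by
    intro v hv
    obtain ⟨w, hw, hwv⟩ := Finset.exists_mem_ne hI2 v
    have h := hind v hv w hw (Ne.symm hwv)
    simp only [InconsAdj] at h
    push_neg at h
    rw [hclosest]
    exact h.1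
  have consist : ∀ v ∈ I, ∀ w ∈ I, v.1 ≠ w.1 → ∀ j : Fin (mm+3) → Fin n,
      j v.1 = v.2 → j w.1 = w.2 →
      c v.1 v.2 (fun t => j (v.1.succAbove t)) = c w.1 w.2 (fun t => j (w.1.succAbove t)) := by
    intro v hv w hw hvw j hj1 hj2
    by_contra hne
    exact hind v hv w hw (fun h => hvw (congrArg Prod.fst h))
      (Or.inr (Or.inr ⟨hvw, j, hj1, hj2, hne⟩))
  -- fibers of I
  set Ib : Fin (mm + 3) → Finset (Fin n) :=
    fun b => (I.filter (fun v => v.1 = b)).image Prod.snd with hIb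
  have hIbmem : ∀ b i, i ∈ Ib b ↔ (b, i) ∈ I := by
    intro b i
    simp only [hIb, Finset.mem_image, Finset.mem_filter]
    constructor
    · rintro ⟨⟨b', i'⟩, ⟨hvI, rfl⟩, rfl⟩
      exact hvI
    · intro h
      exact ⟨(b, i), ⟨h, rfl⟩, rfl⟩
  have hIbcard : ∀ b, (Ib b).card = (I.filter (fun v => v.1 = b)).card := by
    intro b
    refine Finset.card_image_of_injOn ?_
    intro v hv w hw hvw
    simp only [Finset.mem_coe, Finset.mem_filter] at hv hw
    exact Prod.ext (hv.2.trans hw.2.symm) hvw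
  have hIbsum : ∑ b : Fin (mm + 3), (Ib b).card = I.card := by
    rw [Finset.card_eq_sum_card_fiberwise (f := Prod.fst) (t := Finset.univ)
      (fun x _ => Finset.mem_univ _)]
    exact Finset.sum_congr rfl fun b _ => hIbcard b
  have hIble : ∀ b, (Ib b).card ≤ n := by
    intro b
    calc (Ib b).card ≤ Fintype.card (Fin n) := Finset.card_le_univ _
      _ = n := Fintype.card_fin n
  -- pigeonhole: two big fibers
  obtain ⟨b1, hb1⟩ : ∃ b1, n - d < (Ib b1).card := by
    by_contra h
    push_neg at h
    have : ∑ b : Fin (mm + 3), (Ib b).card ≤ ∑ _b : Fin (mm + 3), (n - d) :=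
      Finset.sum_le_sum fun b _ => h b
    simp only [Finset.sum_const, Finset.card_univ, Fintype.card_fin, smul_eq_mul] at this
    omega
  obtain ⟨b2, hb2ne, hb2⟩ : ∃ b2, b2 ≠ b1 ∧ n - d < (Ib b2).card := by
    by_contra h
    push_neg at h
    have hsplit : (Ib b1).card + ∑ b ∈ Finset.univ.erase b1, (Ib b).card = I.card :=
      (Finset.add_sum_erase Finset.univ (fun b => (Ib b).card) (Finset.mem_univ b1)).trans hIbsum
    have : ∑ b ∈ Finset.univ.erase b1, (Ib b).card ≤
        ∑ _b ∈ Finset.univ.erase b1, (n - d) :=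
      Finset.sum_le_sum fun b hb => h b (Finset.ne_of_mem_erase hb)
    simp only [Finset.sum_const, smul_eq_mul, Finset.card_erase_of_mem (Finset.mem_univ b1),
      Finset.card_univ, Fintype.card_fin] at this
    have h1 := hIble b1
    have hsz : (mm + 3) * (n - d) = (mm + 2) * (n - d) + (n - d) := by ring
    have hc3 : mm + 3 - 1 = mm + 2 := rfl
    rw [hc3] at this
    omega
  have hS1 : n < d + (Ib b1).card := by omega
  have hS2 : n < d + (Ib b2).card := by omega
  -- section of the restriction map to S₁
  obtain ⟨L, hL1, hL2⟩ := exists_section C hd (Ib b1) hS1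
  -- the global codeword
  set cstar : (Fin (mm + 3) → Fin n) → F :=
    fun x => L (fun s => c b1 s.1 (Fin.removeNth b1 x)) (x b1) with hcstar
  have hb12 : b1 ≠ b2 := fun h => hb2ne h.symm
  obtain ⟨t2, ht2⟩ := Fin.exists_succAbove_eq hb2ne
  -- key extension property
  have hA : ∀ x : Fin (mm + 3) → Fin n, x b1 ∈ Ib b1 →
      cstar x = c b1 (x b1) (Fin.removeNth b1 x) := by
    intro x hx
    obtain ⟨t1, ht1⟩ := Fin.exists_succAbove_eq hb12
    set Q : Fin n → {i // i ∈ Ib b1} → F :=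
      fun j s => c b1 s.1 (Function.update (Fin.removeNth b1 x) t2 j) with hQ
    have ha : ∀ s : {i // i ∈ Ib b1}, (fun j => Q j s) ∈ C := by
      intro s
      exact hcmem b1 s.1 t2 (Fin.removeNth b1 x)
    have hcols : ∀ j ∈ Ib b2, ∃ u ∈ C, ∀ s : {i // i ∈ Ib b1}, Q j s = u s.1 := by
      intro j hj
      refine ⟨fun i' => c b2 j (Function.update (Fin.removeNth b2 x) t1 i'),
        hcmem b2 j t1 (Fin.removeNth b2 x), ?_⟩
      intro s
      set p : Fin (mm + 3) → Fin n :=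
        Function.update (Function.update x b1 s.1) b2 j with hp
      have hcons := consist (b1, s.1) ((hIbmem b1 s.1).1 s.2) (b2, j) ((hIbmem b2 j).1 hj)
        hb12 p (by simp [hp, Function.update_of_ne hb12]) (by simp [hp])
      have e1 : (fun t => p (b1.succAbove t)) = Function.update (Fin.removeNth b1 x) t2 j := by
        funext t
        rcases eq_or_ne t t2 with rfl | hne
        · simp [hp, ht2]
        · have h1 : b1.succAbove t ≠ b2 := by
            rw [← ht2]; exact fun h => hne (Fin.succAbove_right_injective h)
          simp only [hp]
          rw [Function.update_of_ne h1, Function.update_of_ne (Fin.succAbove_ne b1 t),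
            Function.update_of_ne hne]
          all_goals rfl
      have e2 : (fun t => p (b2.succAbove t)) = Function.update (Fin.removeNth b2 x) t1 s.1 := by
        funext t
        rcases eq_or_ne t t1 with h | hne
        · rw [h, ht1]
          simp [hp, Function.update_of_ne hb12]
        · have h1 : b2.succAbove t ≠ b1 := by
            rw [← ht1]; exact fun h => hne (Fin.succAbove_right_injective h)
          simp only [hp]
          rw [Function.update_of_ne (Fin.succAbove_ne b2 t), Function.update_of_ne h1,
            Function.update_of_ne hne]
          all_goals rfl
      simp only [hQ]
      rw [e1] at hcons
      rw [hcons, e2]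
    -- each row of L∘Q agrees with Q everywhere
    have hrow : ∀ s0 : {i // i ∈ Ib b1},
        (fun j => L (Q j) s0.1) = (fun j => Q j s0) := by
      intro s0
      refine sep_lemma (C : Set (Fin n → F)) hd ?_ (ha s0) (Ib b2) hS2 ?_
      · exact line_comb C L s0.1 Q ha
      · intro j hj
        obtain ⟨u, hu, huq⟩ := hcols j hj
        have : Q j = fun s => u s.1 := funext huq
        rw [this, hL2 u hu]
    have hQx : Q (Fin.removeNth b1 x t2) = fun s => c b1 s.1 (Fin.removeNth b1 x) := by
      funext s
      simp only [hQ]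
      rw [Function.update_eq_self]
    have := congrFun (hrow ⟨x b1, hx⟩) (Fin.removeNth b1 x t2)
    rw [hQx] at this
    exact this
  -- cstar is a tensor codeword
  have hmem : cstar ∈ tensorPow (C : Set (Fin n → F)) (mm + 3) := by
    intro b x
    rcases eq_or_ne b b1 with rfl | hbne
    · have heq : (fun i => cstar (Function.update x b i)) =
          L (fun s => c b s.1 (Fin.removeNth b x)) := by
        funext i
        simp only [hcstar, Fin.removeNth_update, Function.update_self]
      rw [heq]
      exact hL1 _
    · obtain ⟨t0, ht0⟩ := Fin.exists_succAbove_eq hbne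
      have hrem : ∀ i, Fin.removeNth b1 (Function.update x b i) =
          Function.update (Fin.removeNth b1 x) t0 i := by
        intro i
        funext t
        rcases eq_or_ne t t0 with h | hne
        · rw [h]
          show Function.update x b i (b1.succAbove t0) = _
          rw [ht0, Function.update_self, Function.update_self]
        · have h1 : b1.succAbove t ≠ b := by
            rw [← ht0]; exact fun h => hne (Fin.succAbove_right_injective h)
          show Function.update x b i (b1.succAbove t) = _
          rw [Function.update_of_ne h1, Function.update_of_ne hne]
          rfl
      have heq : (fun i => cstar (Function.update x b i)) =
          (fun i => L (fun s => c b1 s.1 (Function.update (Fin.removeNth b1 x) t0 i)) (x b1)) := by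
        funext i
        simp only [hcstar, hrem i, Function.update_of_ne (Ne.symm hbne)]
      rw [heq]
      exact line_comb C L (x b1)
        (fun i s => c b1 s.1 (Function.update (Fin.removeNth b1 x) t0 i))
        (fun s => hcmem b1 s.1 t0 (Fin.removeNth b1 x))
  -- slices of cstar along I coincide with the assigned codewords
  have hslice : ∀ v ∈ I, sliceAt cstar v.1 v.2 = c v.1 v.2 := by
    rintro ⟨b, i⟩ hv
    have hib : i ∈ Ib b := (hIbmem b i).2 hv
    rcases eq_or_ne b b1 with rfl | hbne
    · funext y
      have hx : Fin.insertNth (α := fun _ => Fin n) b i y b = i :=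
        Fin.insertNth_apply_same (α := fun _ => Fin n) b i y
      have := hA (b.insertNth i y) (by rw [hx]; exact hib)
      rw [sliceAt, this, hx, Fin.removeNth_insertNth]
    · obtain ⟨t0, ht0⟩ := Fin.exists_succAbove_eq (Ne.symm hbne)
      refine tensor_sep (C : Set (Fin n → F)) hd
        (slice_mem (C : Set (Fin n → F)) cstar hmem b i) (hcmem b i) t0 (Ib b1) hS1 ?_
      intro y hy
      set x : Fin (mm + 3) → Fin n := b.insertNth i y with hxdef
      have hxb1 : x b1 = y t0 := by rw [hxdef, ← ht0, Fin.insertNth_apply_succAbove]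
      have hxS : x b1 ∈ Ib b1 := by rw [hxb1]; exact hy
      have h1 : sliceAt cstar b i y = c b1 (x b1) (Fin.removeNth b1 x) := hA x hxS
      have h2 := consist (b1, x b1) ((hIbmem b1 (x b1)).1 hxS) (b, i) hv
        (Ne.symm hbne) x rfl (Fin.insertNth_apply_same (α := fun _ => Fin n) b i y)
      rw [h1]
      have h3 : (fun t => x (b.succAbove t)) = y := by
        funext t; rw [hxdef, Fin.insertNth_apply_succAbove]
      rw [← h3]
      exact h2
  -- the agreement set
  set A : Finset (Fin (mm + 3) → Fin n) := Finset.univ.filter (fun x => r x = cstar x) with hAdef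
  have hN2 : (Fintype.card (Fin (mm + 2) → Fin n)) = n ^ (mm + 2) := by simp
  have hN3 : (Fintype.card (Fin (mm + 3) → Fin n)) = n ^ (mm + 3) := by simp
  have hnpos2 : (0 : ℝ) < (n : ℝ) ^ (mm + 2) := by positivity
  have hnpos3 : (0 : ℝ) < (n : ℝ) ^ (mm + 3) := by positivity
  -- each plane of I contributes many agreements
  have hAv : ∀ v ∈ I, (1 - τ) * (n : ℝ) ^ (mm + 2) ≤
      ((A.filter (fun x => x v.1 = v.2)).card : ℝ) := by
    intro v hv
    set B : Finset (Fin (mm + 2) → Fin n) :=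
      Finset.univ.filter (fun y => sliceAt r v.1 v.2 y = c v.1 v.2 y) with hBdef
    have hBcard : B.card + hammingDist (sliceAt r v.1 v.2) (c v.1 v.2) = n ^ (mm + 2) := by
      have h1 : hammingDist (sliceAt r v.1 v.2) (c v.1 v.2) =
          (Finset.univ.filter (fun y => ¬ (sliceAt r v.1 v.2 y = c v.1 v.2 y))).card := by
        simp [hammingDist, Ne]
      rw [h1, hBdef, Finset.card_filter_add_card_filter_not, Finset.card_univ, hN2]
    have hdist : (hammingDist (sliceAt r v.1 v.2) (c v.1 v.2) : ℝ) ≤ τ * (n : ℝ) ^ (mm + 2) := by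
      have h2 := far v hv
      rw [relHammingDist, hN2] at h2
      rw [div_le_iff₀ (by push_cast; positivity)] at h2
      push_cast at h2 ⊢
      linarith
    have hinj : B.card ≤ (A.filter (fun x => x v.1 = v.2)).card := by
      apply Finset.card_le_card_of_injOn (fun y => Fin.insertNth (α := fun _ => Fin n) v.1 v.2 y)
      · intro y hy
        simp only [hBdef, Finset.mem_coe, Finset.mem_filter, Finset.mem_univ, true_and] at hy
        have h1 : r (v.1.insertNth v.2 y) = cstar (v.1.insertNth v.2 y) := by
          have h2 := congrFun (hslice v hv) y
          have h3 : sliceAt cstar v.1 v.2 y = cstar (v.1.insertNth v.2 y) := rfl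
          have h4 : sliceAt r v.1 v.2 y = r (v.1.insertNth v.2 y) := rfl
          rw [← h4, ← h3, hy, ← h2]
        simp only [hAdef, Finset.mem_coe, Finset.mem_filter, Finset.mem_univ, true_and]
        exact ⟨h1, Fin.insertNth_apply_same (α := fun _ => Fin n) v.1 v.2 y⟩
      · intro y1 _ y2 _ h
        have h5 := congrArg (Fin.removeNth v.1) h
        simpa [Fin.removeNth_insertNth] using h5
    have hBreal : (n : ℝ) ^ (mm + 2) - τ * (n : ℝ) ^ (mm + 2) ≤ (B.card : ℝ) := by
      have h6 : (B.card : ℝ) + (hammingDist (sliceAt r v.1 v.2) (c v.1 v.2) : ℝ)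
          = (n : ℝ) ^ (mm + 2) := by exact_mod_cast congrArg (Nat.cast (R := ℝ)) hBcard
      linarith
    calc (1 - τ) * (n : ℝ) ^ (mm + 2) = (n : ℝ) ^ (mm + 2) - τ * (n : ℝ) ^ (mm + 2) := by ring
      _ ≤ (B.card : ℝ) := hBreal
      _ ≤ _ := by exact_mod_cast hinj
  -- double counting
  have hdouble : ∑ v ∈ I, (A.filter (fun x => x v.1 = v.2)).card ≤ (mm + 3) * A.card := by
    have hfib : ∀ x ∈ A, (I.filter (fun v => x v.1 = v.2)).card ≤ mm + 3 := by
      intro x _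
      calc (I.filter (fun v => x v.1 = v.2)).card
          ≤ (Finset.univ : Finset (Fin (mm + 3))).card := by
            apply Finset.card_le_card_of_injOn Prod.fst (fun v _ => Finset.mem_univ _)
            intro v hv w hw hvw
            simp only [Finset.mem_coe, Finset.mem_filter] at hv hw
            refine Prod.ext hvw ?_
            rw [← hv.2, ← hw.2, hvw]
        _ = mm + 3 := by simp
    calc ∑ v ∈ I, (A.filter (fun x => x v.1 = v.2)).card
        = ∑ v ∈ I, ∑ x ∈ A, (if x v.1 = v.2 then 1 else 0) := by
          refine Finset.sum_congr rfl fun v _ => ?_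
          rw [Finset.card_filter]
      _ = ∑ x ∈ A, ∑ v ∈ I, (if x v.1 = v.2 then 1 else 0) := Finset.sum_comm
      _ = ∑ x ∈ A, (I.filter (fun v => x v.1 = v.2)).card := by
          refine Finset.sum_congr rfl fun x _ => ?_
          rw [Finset.card_filter]
      _ ≤ ∑ _x ∈ A, (mm + 3) := Finset.sum_le_sum hfib
      _ = A.card * (mm + 3) := by rw [Finset.sum_const, smul_eq_mul]
      _ = (mm + 3) * A.card := mul_comm _ _
  have hsumlb : (I.card : ℝ) * ((1 - τ) * (n : ℝ) ^ (mm + 2)) ≤ ((mm : ℝ) + 3) * (A.card : ℝ) := by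
    have h1 : (I.card : ℝ) * ((1 - τ) * (n : ℝ) ^ (mm + 2)) ≤
        ∑ v ∈ I, ((A.filter (fun x => x v.1 = v.2)).card : ℝ) := by
      have := Finset.card_nsmul_le_sum I
        (fun v => ((A.filter (fun x => x v.1 = v.2)).card : ℝ))
        ((1 - τ) * (n : ℝ) ^ (mm + 2)) (fun v hv => hAv v hv)
      rwa [nsmul_eq_mul] at this
    have h2 : (∑ v ∈ I, ((A.filter (fun x => x v.1 = v.2)).card : ℝ)) ≤
        ((mm : ℝ) + 3) * (A.card : ℝ) := by
      rw [← Nat.cast_sum]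
      have := hdouble
      calc ((∑ v ∈ I, (A.filter (fun x => x v.1 = v.2)).card : ℕ) : ℝ)
          ≤ (((mm + 3) * A.card : ℕ) : ℝ) := by exact_mod_cast this
        _ = ((mm : ℝ) + 3) * (A.card : ℝ) := by push_cast; ring
    linarith
  -- distance of r to cstar
  have hrdist : (hammingDist r cstar : ℝ) = (n : ℝ) ^ (mm + 3) - (A.card : ℝ) := by
    have h1 : hammingDist r cstar =
        (Finset.univ.filter (fun x => ¬ (r x = cstar x))).card := by
      simp [hammingDist, Ne]
    have h2 : A.card + (Finset.univ.filter (fun x => ¬ (r x = cstar x))).card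
        = n ^ (mm + 3) := by
      rw [hAdef, Finset.card_filter_add_card_filter_not, Finset.card_univ, hN3]
    have h3 : (A.card : ℝ) + ((Finset.univ.filter (fun x => ¬ (r x = cstar x))).card : ℝ)
        = (n : ℝ) ^ (mm + 3) := by exact_mod_cast congrArg (Nat.cast (R := ℝ)) h2
    rw [h1]
    linarith
  have hdle : distToCode (tensorPow (C : Set (Fin n → F)) (mm + 3)) r ≤ relHammingDist r cstar := by
    apply csInf_le
    · refine ⟨0, fun z hz => ?_⟩
      obtain ⟨w, _, rfl⟩ := hz
      exact div_nonneg (Nat.cast_nonneg _) (Nat.cast_nonneg _)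
    · exact ⟨cstar, hmem, rfl⟩
  have hrel : relHammingDist r cstar = 1 - (A.card : ℝ) / (n : ℝ) ^ (mm + 3) := by
    rw [relHammingDist, hN3, hrdist]
    push_cast
    field_simp
  -- final arithmetic
  rw [hrel] at hdle
  refine le_trans hdle ?_
  have hkey : (I.card : ℝ) * (1 - τ) * (n : ℝ) ^ (mm + 3) ≤
      (A.card : ℝ) * (((mm : ℝ) + 3) * (n : ℝ)) := by
    have h1 := mul_le_mul_of_nonneg_right hsumlb (le_of_lt (show (0:ℝ) < (n:ℝ) by exact_mod_cast hn1))
    calc (I.card : ℝ) * (1 - τ) * (n : ℝ) ^ (mm + 3)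
        = (I.card : ℝ) * ((1 - τ) * (n : ℝ) ^ (mm + 2)) * (n : ℝ) := by ring
      _ ≤ ((mm : ℝ) + 3) * (A.card : ℝ) * (n : ℝ) := h1
      _ = (A.card : ℝ) * (((mm : ℝ) + 3) * (n : ℝ)) := by ring
  have hmn : (0 : ℝ) < ((mm : ℝ) + 3) * (n : ℝ) := by
    have : (0:ℝ) < (n:ℝ) := by exact_mod_cast hn1
    positivity
  have hfrac : (I.card : ℝ) / (((mm : ℝ) + 3) * (n : ℝ)) * (1 - τ) ≤
      (A.card : ℝ) / (n : ℝ) ^ (mm + 3) := by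
    rw [div_mul_eq_mul_div, div_le_div_iff₀ hmn hnpos3]
    linarith [hkey]
  have hcast : (((mm + 3 : ℕ)) * n : ℝ) = ((mm : ℝ) + 3) * (n : ℝ) := by push_cast; ring
  push_cast
  linarith [hfrac]
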